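/- Let n ∈ ℕ and let V_1,…,V_n ⊆ [n] satisfy: for all i < j, either V_i ∩ V_j = ∅ or V_i ⊆ V_j. Fix i ∈ [n] and let k = |{ j < i : V_j ⊆ V_i }|. Let σ = (σ_1,…,σ_i) be a sequence of i distinct elements of [n] and let σ' = (σ_1,…,σ_{i−1}). Let n_σ be the number of permutations π of [n] with π(j) ∈ V_j for all j ∈ [n] and π(j) = σ_j for all j ≤ i, and let n_{σ'} be the number of permutations π of [n] with π(j) ∈ V_j for all j ∈ [n] and π(j) = σ_j for all j ≤ i−1. If n_σ > 0, then n_{σ'} = (|V_i| − k) · n_σ. -/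

import Mathlib

/-- Lemma 5.4: let `V_1,…,V_n ⊆ [n]` be laminar, `i ∈ [n]` (0-indexed `i : Fin n`
representing position `i+1`), `k = |{j < i : V_j ⊆ V_i}|`, and let
`σ = (σ_1,…,σ_{i+1})` be a repetition-free sequence. If `n_σ`, the number of permutations
`π` with `π(j) ∈ V_j` for all `j` and prefix `σ`, is positive, then the number `n_{σ'}` of
such permutations with prefix `σ' = (σ_1,…,σ_i)` satisfies `n_{σ'} = (|V_i| − k)·n_σ`. -/
theorem prefix_extension_count (n : ℕ) (V : Fin n → Finset (Fin n))
    (hlam : ∀ i j : Fin n, i < j → V i ∩ V j = ∅ ∨ V i ⊆ V j)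
    (i : Fin n) (σ : Fin ((i : ℕ) + 1) → Fin n) (hσ : Function.Injective σ)
    (hpos : 0 < Nat.card {π : Equiv.Perm (Fin n) //
        (∀ j, π j ∈ V j) ∧
        ∀ (j : Fin n) (hj : (j : ℕ) ≤ (i : ℕ)), π j = σ ⟨(j : ℕ), Nat.lt_succ_of_le hj⟩}) :
    Nat.card {π : Equiv.Perm (Fin n) //
        (∀ j, π j ∈ V j) ∧
        ∀ (j : Fin n) (hj : (j : ℕ) < (i : ℕ)), π j = σ ⟨(j : ℕ), Nat.lt_succ_of_lt hj⟩} =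
      ((V i).card - (Finset.univ.filter (fun j => j < i ∧ V j ⊆ V i)).card) *
        Nat.card {π : Equiv.Perm (Fin n) //
          (∀ j, π j ∈ V j) ∧
          ∀ (j : Fin n) (hj : (j : ℕ) ≤ (i : ℕ)), π j = σ ⟨(j : ℕ), Nat.lt_succ_of_le hj⟩} := by
  classical
  obtain ⟨⟨π0, hπ0V, hπ0pre⟩⟩ := (Nat.card_pos_iff.mp hpos).1
  have hσV : ∀ (j : Fin n) (hj : (j : ℕ) ≤ (i : ℕ)),
      σ ⟨(j : ℕ), Nat.lt_succ_of_le hj⟩ ∈ V j := by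
    intro j hj; rw [← hπ0pre j hj]; exact hπ0V j
  set σi : Fin n := σ ⟨(i : ℕ), Nat.lt_succ_self _⟩ with hσi_def
  have hσiV : σi ∈ V i := hσV i le_rfl
  set σh : Fin n → Fin n := fun j =>
    if h : (j : ℕ) ≤ (i : ℕ) then σ ⟨(j : ℕ), Nat.lt_succ_of_le h⟩ else j with hσh_def
  have hσh_eq : ∀ (j : Fin n) (hj : (j : ℕ) ≤ (i : ℕ)),
      σh j = σ ⟨(j : ℕ), Nat.lt_succ_of_le hj⟩ := by
    intro j hj; exact dif_pos hj
  have hσh_inj : ∀ j j' : Fin n, (j : ℕ) ≤ (i : ℕ) → (j' : ℕ) ≤ (i : ℕ) →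
      σh j = σh j' → j = j' := by
    intro j j' hj hj' h
    rw [hσh_eq j hj, hσh_eq j' hj'] at h
    exact Fin.ext (by simpa using hσ h)
  set B : Finset (Fin n) := (Finset.univ.filter (fun j : Fin n => j < i)).image σh with hB
  set T : Finset (Fin n) := V i \ B with hT
  set P : Equiv.Perm (Fin n) → Prop := fun π => ∀ j, π j ∈ V j with hP
  set A' : Finset (Equiv.Perm (Fin n)) := Finset.univ.filter (fun π =>
    P π ∧ ∀ (j : Fin n) (hj : (j : ℕ) < (i : ℕ)), π j = σ ⟨(j : ℕ), Nat.lt_succ_of_lt hj⟩)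
    with hA'
  set Aσ : Finset (Equiv.Perm (Fin n)) := Finset.univ.filter (fun π =>
    P π ∧ ∀ (j : Fin n) (hj : (j : ℕ) ≤ (i : ℕ)), π j = σ ⟨(j : ℕ), Nat.lt_succ_of_le hj⟩)
    with hAσ
  have hcard1 : Nat.card {π : Equiv.Perm (Fin n) //
      (∀ j, π j ∈ V j) ∧
      ∀ (j : Fin n) (hj : (j : ℕ) < (i : ℕ)), π j = σ ⟨(j : ℕ), Nat.lt_succ_of_lt hj⟩}
      = A'.card := by
    rw [Nat.card_eq_fintype_card, Fintype.card_subtype]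
  have hcard2 : Nat.card {π : Equiv.Perm (Fin n) //
      (∀ j, π j ∈ V j) ∧
      ∀ (j : Fin n) (hj : (j : ℕ) ≤ (i : ℕ)), π j = σ ⟨(j : ℕ), Nat.lt_succ_of_le hj⟩}
      = Aσ.card := by
    rw [Nat.card_eq_fintype_card, Fintype.card_subtype]
  rw [hcard1, hcard2]
  -- every permutation in A' sends i into T
  have hmemT : ∀ π ∈ A', π i ∈ T := by
    intro π hπ
    rw [hA', Finset.mem_filter] at hπ
    obtain ⟨-, hπV, hπpre⟩ := hπ
    rw [hT, Finset.mem_sdiff]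
    refine ⟨hπV i, ?_⟩
    rw [hB]
    simp only [Finset.mem_image, Finset.mem_filter, Finset.mem_univ, true_and]
    rintro ⟨j, hj, hje⟩
    have hjlt : (j : ℕ) < (i : ℕ) := hj
    rw [hσh_eq j (le_of_lt hjlt), ← hπpre j hjlt] at hje
    exact absurd (π.injective hje) (ne_of_lt hj)
  -- laminar consequence
  have hlam' : ∀ j : Fin n, i < j → ∀ x, x ∈ V i → x ∈ V j → V i ⊆ V j := by
    intro j hij x hxi hxj
    rcases hlam i j hij with h | h
    · exact absurd (Finset.mem_inter.mpr ⟨hxi, hxj⟩) (by rw [h]; simp)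
    · exact h
  -- fibers over T all have cardinality Aσ.card
  have hfiber : ∀ v ∈ T, (A'.filter (fun π => π i = v)).card = Aσ.card := by
    intro v hv
    rw [hT, Finset.mem_sdiff] at hv
    obtain ⟨hvVi, hvB⟩ := hv
    have hvne : ∀ (j : Fin n) (hj : (j : ℕ) < (i : ℕ)),
        σ ⟨(j : ℕ), Nat.lt_succ_of_lt hj⟩ ≠ v := by
      intro j hj hcon
      apply hvB
      rw [hB]
      simp only [Finset.mem_image, Finset.mem_filter, Finset.mem_univ, true_and]
      exact ⟨j, hj, by rw [hσh_eq j (le_of_lt hj)]; exact hcon⟩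
    have hσjne : ∀ (j : Fin n) (hj : (j : ℕ) < (i : ℕ)),
        σ ⟨(j : ℕ), Nat.lt_succ_of_lt hj⟩ ≠ σi := by
      intro j hj hcon
      have := hσ hcon
      simp [Fin.ext_iff] at this
      omega
    set τ : Equiv.Perm (Fin n) := Equiv.swap v σi with hτ
    have hττ : ∀ π : Equiv.Perm (Fin n), (π.trans τ).trans τ = π := by
      intro π; ext x; simp [hτ, Equiv.swap_apply_self]
    have hto : ∀ π ∈ A'.filter (fun π => π i = v), π.trans τ ∈ Aσ := by
      intro π hπ
      rw [Finset.mem_filter, hA', Finset.mem_filter] at hπ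
      obtain ⟨⟨-, hπV, hπpre⟩, hπi⟩ := hπ
      have hpre' : ∀ (j : Fin n) (hj : (j : ℕ) ≤ (i : ℕ)),
          (π.trans τ) j = σ ⟨(j : ℕ), Nat.lt_succ_of_le hj⟩ := by
        intro j hj
        rcases lt_or_eq_of_le hj with hj' | hj'
        · have := hπpre j hj'
          simp only [Equiv.trans_apply, this, hτ]
          exact Equiv.swap_apply_of_ne_of_ne (hvne j hj') (hσjne j hj')
        · have hji : j = i := Fin.ext hj'
          subst hji
          simp only [Equiv.trans_apply, hπi, hτ, Equiv.swap_apply_left]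
          exact hσi_def
      refine Finset.mem_filter.mpr ⟨Finset.mem_univ _, ?_, hpre'⟩
      intro j
      by_cases hj : (j : ℕ) ≤ (i : ℕ)
      · rw [hpre' j hj]; exact hσV j hj
      · have hij : i < j := lt_of_not_ge (fun h => hj h)
        simp only [Equiv.trans_apply, hτ]
        by_cases h1 : π j = v
        · rw [h1, Equiv.swap_apply_left]
          exact hlam' j hij v hvVi (h1 ▸ hπV j) hσiV
        · by_cases h2 : π j = σi
          · rw [h2, Equiv.swap_apply_right]
            exact hlam' j hij σi hσiV (h2 ▸ hπV j) hvVi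
          · rw [Equiv.swap_apply_of_ne_of_ne h1 h2]
            exact hπV j
    have hfrom : ∀ π ∈ Aσ, π.trans τ ∈ A'.filter (fun π => π i = v) := by
      intro π hπ
      rw [hAσ, Finset.mem_filter] at hπ
      obtain ⟨-, hπV, hπpre⟩ := hπ
      have hπi : π i = σi := hπpre i le_rfl
      have hpre' : ∀ (j : Fin n) (hj : (j : ℕ) < (i : ℕ)),
          (π.trans τ) j = σ ⟨(j : ℕ), Nat.lt_succ_of_lt hj⟩ := by
        intro j hj
        have := hπpre j (le_of_lt hj)
        simp only [Equiv.trans_apply, this, hτ]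
        exact Equiv.swap_apply_of_ne_of_ne (hvne j hj) (hσjne j hj)
      have hτi : (π.trans τ) i = v := by
        simp only [Equiv.trans_apply, hπi, hτ, Equiv.swap_apply_right]
      refine Finset.mem_filter.mpr ⟨Finset.mem_filter.mpr ⟨Finset.mem_univ _, ?_, hpre'⟩, hτi⟩
      intro j
      by_cases hj : (j : ℕ) ≤ (i : ℕ)
      · rcases lt_or_eq_of_le hj with hj' | hj'
        · rw [hpre' j hj']; exact hσV j (le_of_lt hj')
        · have hji : j = i := Fin.ext hj'
          subst hji
          rw [hτi]; exact hvVi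
      · have hij : i < j := lt_of_not_ge (fun h => hj h)
        simp only [Equiv.trans_apply, hτ]
        by_cases h1 : π j = v
        · rw [h1, Equiv.swap_apply_left]
          exact hlam' j hij v hvVi (h1 ▸ hπV j) hσiV
        · by_cases h2 : π j = σi
          · rw [h2, Equiv.swap_apply_right]
            exact hlam' j hij σi hσiV (h2 ▸ hπV j) hvVi
          · rw [Equiv.swap_apply_of_ne_of_ne h1 h2]
            exact hπV j
    exact Finset.card_bij' (fun π _ => π.trans τ) (fun π _ => π.trans τ)
      hto hfrom (fun π _ => hττ π) (fun π _ => hττ π)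
  have hsum : A'.card = T.card * Aσ.card := by
    rw [Finset.card_eq_sum_card_fiberwise hmemT]
    rw [Finset.sum_congr rfl hfiber, Finset.sum_const, smul_eq_mul]
  rw [hsum]
  congr 1
  -- T.card = (V i).card - k
  have hinter : V i ∩ B = (Finset.univ.filter (fun j : Fin n => j < i ∧ V j ⊆ V i)).image σh := by
    ext x
    simp only [Finset.mem_inter, hB, Finset.mem_image, Finset.mem_filter, Finset.mem_univ,
      true_and]
    constructor
    · rintro ⟨hxV, j, hj, rfl⟩
      have hjle : (j : ℕ) ≤ (i : ℕ) := le_of_lt hj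
      refine ⟨j, ⟨hj, ?_⟩, rfl⟩
      have hxj : σh j ∈ V j := by rw [hσh_eq j hjle]; exact hσV j hjle
      rcases hlam j i hj with h | h
      · exact absurd (Finset.mem_inter.mpr ⟨hxj, hxV⟩) (by rw [h]; simp)
      · exact h
    · rintro ⟨j, ⟨hj, hsub⟩, rfl⟩
      have hjle : (j : ℕ) ≤ (i : ℕ) := le_of_lt hj
      refine ⟨?_, j, hj, rfl⟩
      apply hsub
      rw [hσh_eq j hjle]; exact hσV j hjle
  have hintercard : (V i ∩ B).card
      = (Finset.univ.filter (fun j : Fin n => j < i ∧ V j ⊆ V i)).card := by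
    rw [hinter]
    apply Finset.card_image_of_injOn
    intro j hj j' hj' h
    simp only [Finset.mem_coe, Finset.mem_filter] at hj hj'
    exact hσh_inj j j' (le_of_lt hj.2.1) (le_of_lt hj'.2.1) h
  rw [hT, ← Finset.sdiff_inter_self_left (V i) B, Finset.card_sdiff_of_subset Finset.inter_subset_left,
    hintercard]
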